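/- Let n ≥ 2, ε ∈ {−1, 1}, U = {x ∈ ℝⁿ : 1 + ε|x|² > 0}, and ρ : U → ℝ, ρ(x) = ln 2 − ln(1 + ε|x|²). Define the vector field E(x) = Δ(∇ρ)(x) − Δρ(x)·∇ρ(x) + 2∇(|∇ρ|²)(x) + (2−n)|∇ρ(x)|²·∇ρ(x) + ε(n−1)e^{2ρ(x)}·∇ρ(x). Then E(x) = −8(n−4)(1 − ε|x|²)·x/(1 + ε|x|²)³ for all x ∈ U; consequently E ≡ 0 on U if and only if n = 4. -/

import Mathlib

noncomputable section

abbrev E (n : ℕ) := EuclideanSpace ℝ (Fin n)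

/-- Partial derivative in the `i`-th coordinate direction. -/
def pd {m : ℕ} (u : E m → ℝ) (i : Fin m) : E m → ℝ :=
  fun x => fderiv ℝ u x (EuclideanSpace.single i 1)

/-- Euclidean Laplacian `Δu = Σᵢ ∂²u/∂xᵢ²`. -/
def lap {m : ℕ} (u : E m → ℝ) : E m → ℝ :=
  fun x => ∑ i, pd (pd u i) i x

namespace StereoBiharm

def Fe (ε : ℝ) {n : ℕ} (y : E n) : ℝ := 1 + ε * ‖y‖ ^ 2

def rho (ε : ℝ) {n : ℕ} : E n → ℝ := fun z => Real.log 2 - Real.log (1 + ε * ‖z‖ ^ 2)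

def G (ε : ℝ) {n : ℕ} (i : Fin n) (y : E n) : ℝ := -(2*ε) * (Fe ε y)⁻¹ * y i

def G1 (ε : ℝ) {n : ℕ} (i j : Fin n) (y : E n) : ℝ :=
  -(2*ε) * (Fe ε y)⁻¹ * (if i = j then 1 else 0) + 4*ε^2*((Fe ε y)⁻¹)^2 * y i * y j

def Hs (ε : ℝ) {n : ℕ} (y : E n) : ℝ := 4*ε^2*((Fe ε y)⁻¹)^2*‖y‖^2

variable {n : ℕ} (ε : ℝ)

lemma sum_sq (x : E n) : ∑ j, (x j)^2 = ‖x‖^2 := by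
  rw [EuclideanSpace.norm_eq, Real.sq_sqrt (by positivity)]
  simp [Real.norm_eq_abs, sq_abs]

lemma hasFDerivAt_nsq (x : E n) :
    HasFDerivAt (fun y : E n => ‖y‖ ^ 2) ((2:ℝ) • innerSL ℝ x) x := by
  have h := (hasFDerivAt_id x).inner ℝ (hasFDerivAt_id x)
  simp only [real_inner_self_eq_norm_sq, id] at h
  refine h.congr_fderiv ?_
  ext v
  simp only [ContinuousLinearMap.smul_apply, innerSL_apply_apply, ContinuousLinearMap.comp_apply,
    ContinuousLinearMap.prod_apply, ContinuousLinearMap.id_apply, fderivInnerCLM_apply,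
    smul_eq_mul]
  rw [real_inner_comm]; ring

lemma hasFDerivAt_Fe (x : E n) :
    HasFDerivAt (Fe ε) ((2*ε) • innerSL ℝ x) x := by
  have h := ((hasFDerivAt_nsq x).const_mul ε).const_add 1
  refine h.congr_fderiv ?_
  ext v
  simp only [ContinuousLinearMap.smul_apply, innerSL_apply_apply, smul_eq_mul]
  ring

lemma isOpen_V : IsOpen {y : E n | Fe ε y ≠ 0} := by
  have hc : Continuous (Fe ε (n := n)) := by
    unfold Fe
    exact continuous_const.add (continuous_const.mul ((continuous_norm).pow 2))
  have : {y : E n | Fe ε y ≠ 0} = (Fe ε) ⁻¹' ({0}ᶜ) := rfl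
  rw [this]
  exact (isOpen_compl_singleton).preimage hc

lemma hasFDerivAt_invFe {x : E n} (hx : Fe ε x ≠ 0) :
    HasFDerivAt (fun y : E n => (Fe ε y)⁻¹)
      ((-((Fe ε x)^2)⁻¹) • ((2*ε) • innerSL ℝ x)) x := by
  exact (hasDerivAt_inv hx).comp_hasFDerivAt x (hasFDerivAt_Fe ε x)

lemma hasFDerivAt_rho {x : E n} (hx : Fe ε x ≠ 0) :
    HasFDerivAt (rho ε) ((-(2*ε) * (Fe ε x)⁻¹) • innerSL ℝ x) x := by
  have h := ((Real.hasDerivAt_log hx).comp_hasFDerivAt x (hasFDerivAt_Fe ε x)).const_sub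
    (Real.log 2)
  refine h.congr_fderiv ?_
  ext v
  simp only [ContinuousLinearMap.smul_apply, innerSL_apply_apply, smul_eq_mul,
    ContinuousLinearMap.sub_apply, ContinuousLinearMap.zero_apply, ContinuousLinearMap.neg_apply]
  ring

lemma hasGradientAt_of_c_smul {f : E n → ℝ} {c : ℝ} {x : E n}
    (h : HasFDerivAt f (c • innerSL ℝ x) x) : HasGradientAt f (c • x) x := by
  rw [hasGradientAt_iff_hasFDerivAt]
  refine h.congr_fderiv ?_
  ext v
  simp [InnerProductSpace.toDual_apply_apply, real_inner_smul_left]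

lemma gradient_rho {x : E n} (hx : Fe ε x ≠ 0) :
    gradient (rho ε) x = (-(2*ε) * (Fe ε x)⁻¹) • x :=
  (hasGradientAt_of_c_smul (hasFDerivAt_rho ε hx)).gradient

lemma gradient_rho_apply {x : E n} (hx : Fe ε x ≠ 0) (i : Fin n) :
    gradient (rho ε) x i = G ε i x := by
  rw [gradient_rho ε hx]; rfl

lemma norm_gradient_rho {x : E n} (hx : Fe ε x ≠ 0) :
    ‖gradient (rho ε) x‖ ^ 2 = Hs ε x := by
  rw [gradient_rho ε hx, norm_smul, Hs, mul_pow, Real.norm_eq_abs, sq_abs]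
  ring

lemma pd_rho {x : E n} (hx : Fe ε x ≠ 0) (j : Fin n) :
    pd (rho ε) j x = G ε j x := by
  simp only [pd]
  rw [(hasFDerivAt_rho ε hx).fderiv]
  simp only [ContinuousLinearMap.smul_apply, innerSL_apply_apply, smul_eq_mul,
    EuclideanSpace.inner_single_right, map_one, one_mul, G, starRingEnd_apply, star_trivial]

lemma pd_G {x : E n} (hx : Fe ε x ≠ 0) (i j : Fin n) :
    pd (G ε i) j x = G1 ε i j x := by
  have hu : HasFDerivAt (fun y : E n => -(2*ε) * (Fe ε y)⁻¹)
      ((-(2*ε)) • ((-((Fe ε x)^2)⁻¹) • ((2*ε) • innerSL ℝ x))) x :=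
    (hasFDerivAt_invFe ε hx).const_mul _
  have hv : HasFDerivAt (fun y : E n => y i) (EuclideanSpace.proj (𝕜 := ℝ) i) x :=
    (EuclideanSpace.proj (𝕜 := ℝ) i).hasFDerivAt
  have h : HasFDerivAt (G ε i)
      ((-(2*ε) * (Fe ε x)⁻¹) • EuclideanSpace.proj (𝕜 := ℝ) i
        + x i • (-(2*ε)) • ((-((Fe ε x)^2)⁻¹) • ((2*ε) • innerSL ℝ x))) x := hu.mul hv
  simp only [pd]
  rw [h.fderiv]
  simp only [ContinuousLinearMap.add_apply, ContinuousLinearMap.smul_apply, innerSL_apply_apply,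
    smul_eq_mul, PiLp.proj_apply, EuclideanSpace.single_apply,
    EuclideanSpace.inner_single_right, map_one, one_mul, G1, starRingEnd_apply, star_trivial]
  field_simp
  try ring
  try tauto

lemma pd_G1 {x : E n} (hx : Fe ε x ≠ 0) (i j : Fin n) :
    pd (G1 ε i j) j x =
      (if i = j then 1 else 0) * (8*ε^2*((Fe ε x)⁻¹)^2 * x j)
        + 4*ε^2*((Fe ε x)⁻¹)^2 * x i - 16*ε^3*((Fe ε x)⁻¹)^3 * x i * (x j)^2 := by
  have hinv := hasFDerivAt_invFe ε hx
  have hpi : HasFDerivAt (fun y : E n => y i) (EuclideanSpace.proj (𝕜 := ℝ) i) x :=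
    (EuclideanSpace.proj (𝕜 := ℝ) i).hasFDerivAt
  have hpj : HasFDerivAt (fun y : E n => y j) (EuclideanSpace.proj (𝕜 := ℝ) j) x :=
    (EuclideanSpace.proj (𝕜 := ℝ) j).hasFDerivAt
  have h1 := hinv.const_mul (-(2*ε) * (if i = j then (1:ℝ) else 0))
  have h2 := ((((hinv.mul hinv).const_mul (4*ε^2)).mul hpi).mul hpj)
  obtain ⟨D, h, hD⟩ : ∃ D : E n →L[ℝ] ℝ, HasFDerivAt (G1 ε i j) D x ∧
      D = _ := ⟨_, (h1.add h2).congr_of_eventuallyEq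
        (Filter.Eventually.of_forall fun y => by simp only [G1, Pi.add_apply, Pi.mul_apply]; ring), rfl⟩
  subst hD
  simp only [pd]
  rw [h.fderiv]
  simp only [ContinuousLinearMap.add_apply, ContinuousLinearMap.smul_apply, innerSL_apply_apply,
    smul_eq_mul, PiLp.proj_apply, EuclideanSpace.single_apply,
    EuclideanSpace.inner_single_right, map_one, one_mul, Pi.mul_apply, starRingEnd_apply,
    star_trivial]
  rcases eq_or_ne i j with hij | hij
  · subst hij
    simp only [if_pos rfl, eq_self_iff_true, ite_true]
    field_simp
    try ring
    try tauto
  · simp only [if_neg hij, eq_self_iff_true, ite_true]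
    field_simp
    try ring
    try tauto

lemma hasGradientAt_Hs {x : E n} (hx : Fe ε x ≠ 0) :
    HasGradientAt (Hs ε)
      ((8*ε^2*((Fe ε x)⁻¹)^2 - 16*ε^3*((Fe ε x)⁻¹)^3*‖x‖^2) • x) x := by
  have hinv := hasFDerivAt_invFe ε hx
  have h2 := ((hinv.mul hinv).const_mul (4*ε^2)).mul (hasFDerivAt_nsq x)
  refine hasGradientAt_of_c_smul ?_
  have h : HasFDerivAt (Hs ε) _ x :=
    h2.congr_of_eventuallyEq (Filter.Eventually.of_forall fun y => by simp only [Hs, Pi.mul_apply]; ring)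
  refine h.congr_fderiv ?_
  ext v
  simp only [ContinuousLinearMap.add_apply, ContinuousLinearMap.smul_apply, innerSL_apply_apply,
    smul_eq_mul, Pi.mul_apply]
  field_simp
  try ring
  try tauto

lemma gradient_congr {f g : E n → ℝ} {x : E n} (h : f =ᶠ[nhds x] g) :
    gradient f x = gradient g x := by
  unfold gradient
  rw [h.fderiv_eq]

set_option maxHeartbeats 1000000 in
lemma key (hn : 2 ≤ n) (hε : ε = -1 ∨ ε = 1) (x : E n) (hx : 0 < 1 + ε * ‖x‖ ^ 2)
    (i : Fin n) :
    (lap (fun y =>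
        gradient (fun z : E n => Real.log 2 - Real.log (1 + ε * ‖z‖ ^ 2)) y i) x
      - lap (fun z : E n => Real.log 2 - Real.log (1 + ε * ‖z‖ ^ 2)) x
          * gradient (fun z : E n => Real.log 2 - Real.log (1 + ε * ‖z‖ ^ 2)) x i
      + 2 * gradient (fun y =>
          ‖gradient (fun z : E n => Real.log 2 - Real.log (1 + ε * ‖z‖ ^ 2)) y‖ ^ 2) x i
      + (2 - (n : ℝ))
          * ‖gradient (fun z : E n => Real.log 2 - Real.log (1 + ε * ‖z‖ ^ 2)) x‖ ^ 2
          * gradient (fun z : E n => Real.log 2 - Real.log (1 + ε * ‖z‖ ^ 2)) x i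
      + ε * ((n : ℝ) - 1)
          * Real.exp (2 * (Real.log 2 - Real.log (1 + ε * ‖x‖ ^ 2)))
          * gradient (fun z : E n => Real.log 2 - Real.log (1 + ε * ‖z‖ ^ 2)) x i)
      = -8 * ((n : ℝ) - 4) * (1 - ε * ‖x‖ ^ 2) * x i / (1 + ε * ‖x‖ ^ 2) ^ 3 := by
  have hρ : (fun z : E n => Real.log 2 - Real.log (1 + ε * ‖z‖ ^ 2)) = rho ε := rfl
  rw [hρ]
  have hfe : Fe ε x ≠ 0 := ne_of_gt hx
  have hV : {y : E n | Fe ε y ≠ 0} ∈ nhds x := (isOpen_V ε).mem_nhds hfe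
  -- first derivatives as eventual equalities
  have hpd1 : ∀ y : E n, Fe ε y ≠ 0 → ∀ j, pd (fun z => gradient (rho ε) z i) j y = G1 ε i j y := by
    intro y hy j
    have hev : (fun z => gradient (rho ε) z i) =ᶠ[nhds y] G ε i :=
      Filter.eventuallyEq_of_mem ((isOpen_V ε).mem_nhds hy)
        (fun z hz => gradient_rho_apply ε hz i)
    have : pd (fun z => gradient (rho ε) z i) j y = pd (G ε i) j y := by
      simp only [pd]; rw [hev.fderiv_eq]
    rw [this, pd_G ε hy i j]
  -- T1 : lap of the gradient coordinate
  have hlap1 : lap (fun y => gradient (rho ε) y i) x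
      = 8*ε^2*((Fe ε x)⁻¹)^2 * x i + (n:ℝ)*(4*ε^2*((Fe ε x)⁻¹)^2 * x i)
        - 16*ε^3*((Fe ε x)⁻¹)^3 * x i * ‖x‖^2 := by
    have hterm : ∀ j, pd (pd (fun z => gradient (rho ε) z i) j) j x
        = (if i = j then 1 else 0) * (8*ε^2*((Fe ε x)⁻¹)^2 * x j)
          + 4*ε^2*((Fe ε x)⁻¹)^2 * x i - 16*ε^3*((Fe ε x)⁻¹)^3 * x i * (x j)^2 := by
      intro j
      have hev : pd (fun z => gradient (rho ε) z i) j =ᶠ[nhds x] G1 ε i j :=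
        Filter.eventuallyEq_of_mem hV (fun y hy => hpd1 y hy j)
      have h2 : pd (pd (fun z => gradient (rho ε) z i) j) j x = pd (G1 ε i j) j x := by
        simp only [pd] at hev ⊢
        rw [hev.fderiv_eq]
      rw [h2, pd_G1 ε hfe i j]
    simp only [lap]
    rw [Finset.sum_congr rfl (fun j _ => hterm j)]
    rw [Finset.sum_sub_distrib, Finset.sum_add_distrib]
    simp only [ite_mul, zero_mul, Finset.sum_ite_eq, Finset.mem_univ, if_true,
      Finset.sum_const, Finset.card_univ, Fintype.card_fin, nsmul_eq_mul, ← Finset.mul_sum,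
      sum_sq]
    ring
  -- T2 : lap rho
  have hpdρ : ∀ y : E n, Fe ε y ≠ 0 → ∀ j, pd (rho ε) j y = G ε j y := fun y hy => pd_rho ε hy
  have hlap2 : lap (rho ε) x
      = (n:ℝ)*(-(2*ε) * (Fe ε x)⁻¹) + 4*ε^2*((Fe ε x)⁻¹)^2 * ‖x‖^2 := by
    have hterm : ∀ j, pd (pd (rho ε) j) j x
        = -(2*ε) * (Fe ε x)⁻¹ + 4*ε^2*((Fe ε x)⁻¹)^2 * (x j)^2 := by
      intro j
      have hev : pd (rho ε) j =ᶠ[nhds x] G ε j :=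
        Filter.eventuallyEq_of_mem hV (fun y hy => hpdρ y hy j)
      have h2 : pd (pd (rho ε) j) j x = pd (G ε j) j x := by
        simp only [pd] at hev ⊢
        rw [hev.fderiv_eq]
      rw [h2, pd_G ε hfe j j]
      simp only [G1, eq_self_iff_true, if_true]
      ring
    simp only [lap]
    rw [Finset.sum_congr rfl (fun j _ => hterm j)]
    rw [Finset.sum_add_distrib]
    simp only [Finset.sum_const, Finset.card_univ, Fintype.card_fin, nsmul_eq_mul,
      ← Finset.mul_sum, sum_sq]
  -- T3 : gradient of |grad rho|^2
  have hg3 : gradient (fun y => ‖gradient (rho ε) y‖ ^ 2) x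
      = (8*ε^2*((Fe ε x)⁻¹)^2 - 16*ε^3*((Fe ε x)⁻¹)^3*‖x‖^2) • x := by
    have hev : (fun y => ‖gradient (rho ε) y‖ ^ 2) =ᶠ[nhds x] Hs ε :=
      Filter.eventuallyEq_of_mem hV (fun y hy => norm_gradient_rho ε hy)
    rw [gradient_congr hev]
    exact (hasGradientAt_Hs ε hfe).gradient
  have hg3i : gradient (fun y => ‖gradient (rho ε) y‖ ^ 2) x i
      = (8*ε^2*((Fe ε x)⁻¹)^2 - 16*ε^3*((Fe ε x)⁻¹)^3*‖x‖^2) * x i := by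
    rw [hg3]; rfl
  -- T5 : exponential
  have hexp : Real.exp (2 * (Real.log 2 - Real.log (1 + ε * ‖x‖ ^ 2)))
      = 4 * ((Fe ε x)⁻¹)^2 := by
    rw [two_mul, Real.exp_add, Real.exp_sub, Real.exp_log two_pos, Real.exp_log hx]
    have : Fe ε x = 1 + ε * ‖x‖ ^ 2 := rfl
    rw [this]
    field_simp
    ring
  rw [hlap1, hlap2, hg3i, hexp, norm_gradient_rho ε hfe, gradient_rho_apply ε hfe i]
  have hfe' : (1 + ε * ‖x‖ ^ 2) ≠ 0 := ne_of_gt hx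
  have hFe : Fe ε x = 1 + ε * ‖x‖ ^ 2 := rfl
  simp only [G, Hs, hFe]
  clear hpd1 hpdρ hlap1 hlap2 hg3 hg3i hexp hV hρ hfe hFe hn hx
  generalize ‖x‖ ^ 2 = s at hfe' ⊢
  generalize x i = t
  field_simp [hfe']
  rcases hε with h | h <;> subst h <;> ring

end StereoBiharm

/-- The biharmonicity equation for the identity map from the flat metric to the
constant-curvature-ε metric `e^{2ρ}ds²`, `ρ = ln2 − ln(1+ε|x|²)`: the vector field
`E = Δ(∇ρ) − Δρ·∇ρ + 2∇(|∇ρ|²) + (2−n)|∇ρ|²∇ρ + ε(n−1)e^{2ρ}∇ρ` equals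
`−8(n−4)(1−ε|x|²)x/(1+ε|x|²)³`, hence vanishes identically iff `n = 4`. -/
theorem stereographic_biharmonic_iff_dim_four (n : ℕ) (hn : 2 ≤ n)
    (ε : ℝ) (hε : ε = -1 ∨ ε = 1) :
    (∀ x : E n, 0 < 1 + ε * ‖x‖ ^ 2 → ∀ i : Fin n,
      (lap (fun y =>
          gradient (fun z : E n => Real.log 2 - Real.log (1 + ε * ‖z‖ ^ 2)) y i) x
        - lap (fun z : E n => Real.log 2 - Real.log (1 + ε * ‖z‖ ^ 2)) x
            * gradient (fun z : E n => Real.log 2 - Real.log (1 + ε * ‖z‖ ^ 2)) x i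
        + 2 * gradient (fun y =>
            ‖gradient (fun z : E n => Real.log 2 - Real.log (1 + ε * ‖z‖ ^ 2)) y‖ ^ 2) x i
        + (2 - (n : ℝ))
            * ‖gradient (fun z : E n => Real.log 2 - Real.log (1 + ε * ‖z‖ ^ 2)) x‖ ^ 2
            * gradient (fun z : E n => Real.log 2 - Real.log (1 + ε * ‖z‖ ^ 2)) x i
        + ε * ((n : ℝ) - 1)
            * Real.exp (2 * (Real.log 2 - Real.log (1 + ε * ‖x‖ ^ 2)))
            * gradient (fun z : E n => Real.log 2 - Real.log (1 + ε * ‖z‖ ^ 2)) x i)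
        = -8 * ((n : ℝ) - 4) * (1 - ε * ‖x‖ ^ 2) * x i / (1 + ε * ‖x‖ ^ 2) ^ 3) ∧
    ((∀ x : E n, 0 < 1 + ε * ‖x‖ ^ 2 → ∀ i : Fin n,
      (lap (fun y =>
          gradient (fun z : E n => Real.log 2 - Real.log (1 + ε * ‖z‖ ^ 2)) y i) x
        - lap (fun z : E n => Real.log 2 - Real.log (1 + ε * ‖z‖ ^ 2)) x
            * gradient (fun z : E n => Real.log 2 - Real.log (1 + ε * ‖z‖ ^ 2)) x i
        + 2 * gradient (fun y =>
            ‖gradient (fun z : E n => Real.log 2 - Real.log (1 + ε * ‖z‖ ^ 2)) y‖ ^ 2) x i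
        + (2 - (n : ℝ))
            * ‖gradient (fun z : E n => Real.log 2 - Real.log (1 + ε * ‖z‖ ^ 2)) x‖ ^ 2
            * gradient (fun z : E n => Real.log 2 - Real.log (1 + ε * ‖z‖ ^ 2)) x i
        + ε * ((n : ℝ) - 1)
            * Real.exp (2 * (Real.log 2 - Real.log (1 + ε * ‖x‖ ^ 2)))
            * gradient (fun z : E n => Real.log 2 - Real.log (1 + ε * ‖z‖ ^ 2)) x i)
        = 0) ↔ n = 4) := by
  refine ⟨fun x hx i => StereoBiharm.key ε hn hε x hx i, ?_, ?_⟩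
  · intro h
    have i0 : Fin n := ⟨0, by omega⟩
    set x₀ : E n := EuclideanSpace.single i0 (1/2 : ℝ) with hx₀def
    have hnorm : ‖x₀‖ = 1/2 := by
      rw [hx₀def, EuclideanSpace.norm_single]
      norm_num
    have hx₀pos : 0 < 1 + ε * ‖x₀‖ ^ 2 := by
      rw [hnorm]; rcases hε with h' | h' <;> subst h' <;> norm_num
    have h1 := StereoBiharm.key ε hn hε x₀ hx₀pos i0
    have h2 := h x₀ hx₀pos i0
    rw [h1] at h2
    have hx₀i : x₀ i0 = 1/2 := by
      rw [hx₀def, EuclideanSpace.single_apply, if_pos rfl]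
    rw [hnorm, hx₀i] at h2
    have hcast : (n:ℝ) = 4 := by
      rcases hε with h' | h' <;> subst h' <;>
        · field_simp at h2
          linarith [h2]
    exact_mod_cast hcast
  · intro h
    subst h
    intro x hx i
    rw [StereoBiharm.key ε hn hε x hx i]
    norm_num


end
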